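/- For α, β > -1 and n ≥ 1, the partial derivative of the Jacobi kernel at (1,1) equals K_n^{(0,1)}(1,1) = (2^{-α-β-2}/Γ(α+1)) · (Γ(n+α+β+3)/Γ(n+β+1)) · (Γ(n+α+2)/(Γ(n) Γ(α+3))). -/

import Mathlib

set_option maxHeartbeats 1000000

open Real Finset

/-- The classical Jacobi polynomial `P_n^{(α,β)}`, via its explicit hypergeometric sum,
normalized so that `P_n^{(α,β)}(1) = binom(n+α, n)`. -/
noncomputable def jacobiP (α β : ℝ) (n : ℕ) (t : ℝ) : ℝ :=
  (Real.Gamma (α + n + 1) / (n.factorial * Real.Gamma (α + β + n + 1))) *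
    ∑ k ∈ Finset.range (n + 1),
      (n.choose k : ℝ) * (Real.Gamma (α + β + n + k + 1) / Real.Gamma (α + k + 1)) *
        ((t - 1) / 2) ^ k

/-- The squared `L²` norm `h_n^{(α,β)}` of the Jacobi polynomial. -/
noncomputable def jacobiH (α β : ℝ) (n : ℕ) : ℝ :=
  2 ^ (α + β + 1) * Real.Gamma (n + α + 1) * Real.Gamma (n + β + 1) /
    ((2 * n + α + β + 1) * n.factorial * Real.Gamma (n + α + β + 1))

/-- The Christoffel–Darboux kernel of Jacobi polynomials. -/
noncomputable def jacobiK (α β : ℝ) (n : ℕ) (t u : ℝ) : ℝ :=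
  ∑ k ∈ Finset.range (n + 1), jacobiP α β k t * jacobiP α β k u / jacobiH α β k

/-- Auxiliary summand for the Jacobi kernel derivative computation. -/
noncomputable def Saux (α β : ℝ) (k : ℕ) : ℝ :=
  k * (α+β+k+1) * (2*k+α+β+1) * Real.Gamma (α+k+1) * Real.Gamma (α+β+k+1) /
    (Real.Gamma (α+2) * k.factorial * Real.Gamma (k+β+1))

private lemma hdPow (j : ℕ) :
    HasDerivAt (fun u : ℝ => ((u - 1)/2)^j) ((j:ℝ) * (0:ℝ)^(j-1) * (1/2)) 1 := by
  have h : HasDerivAt (fun u : ℝ => (u - 1)/2) (1/2) 1 :=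
    ((hasDerivAt_id 1).sub_const 1).div_const 2
  simpa using h.fun_pow j

private lemma jacobiP_hasDerivAt (α β : ℝ) (k : ℕ) :
    HasDerivAt (fun u => jacobiP α β k u)
      ((Real.Gamma (α + k + 1) / (k.factorial * Real.Gamma (α + β + k + 1))) *
        ∑ j ∈ Finset.range (k+1),
          (k.choose j : ℝ) * (Real.Gamma (α + β + k + j + 1) / Real.Gamma (α + j + 1)) *
            ((j:ℝ) * (0:ℝ)^(j-1) * (1/2))) 1 := by
  unfold jacobiP
  exact (HasDerivAt.fun_sum (fun j _ => (hdPow j).const_mul _)).const_mul _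

private lemma sum_eval (f : ℕ → ℝ) (k : ℕ) (hk : 1 ≤ k) :
    ∑ j ∈ Finset.range (k+1), f j * ((j:ℝ) * (0:ℝ)^(j-1) * (1/2)) = f 1 * (1/2) := by
  rw [Finset.sum_eq_single 1]
  · norm_num
  · intro j _ hj
    rcases j with _ | _ | j
    · simp
    · simp at hj
    · simp
  · intro h; exact absurd (Finset.mem_range.mpr (by omega)) h

private lemma jacobiP_one (α β : ℝ) (k : ℕ) :
    jacobiP α β k 1 = (Real.Gamma (α + k + 1) / (k.factorial * Real.Gamma (α + β + k + 1))) *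
      (Real.Gamma (α + β + k + 1) / Real.Gamma (α + 1)) := by
  unfold jacobiP
  congr 1
  rw [Finset.sum_eq_single 0]
  · simp
  · intro j _ hj
    rcases j with _ | j
    · simp at hj
    · simp
  · intro h; simp at h

private lemma term_eq (α β : ℝ) (hα : -1 < α) (hβ : -1 < β) (k : ℕ) :
    jacobiP α β k 1 *
      ((Real.Gamma (α + k + 1) / (k.factorial * Real.Gamma (α + β + k + 1))) *
        ∑ j ∈ Finset.range (k+1),
          (k.choose j : ℝ) * (Real.Gamma (α + β + k + j + 1) / Real.Gamma (α + j + 1)) *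
            ((j:ℝ) * (0:ℝ)^(j-1) * (1/2))) / jacobiH α β k
    = (2:ℝ)^(-α-β-2) / Real.Gamma (α+1) * Saux α β k := by
  rcases Nat.eq_zero_or_pos k with rfl | hk
  · simp [Saux]
  · have hk1 : (1:ℝ) ≤ k := by exact_mod_cast hk
    rw [sum_eval _ k hk, jacobiP_one]
    rw [Nat.choose_one_right]
    unfold jacobiH Saux
    push_cast
    have hab : α+β+(k:ℝ)+1 > 0 := by linarith
    have hGab : Real.Gamma (α+β+(k:ℝ)+1) ≠ 0 := (Real.Gamma_pos_of_pos hab).ne'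
    have hGa : Real.Gamma (α+(k:ℝ)+1) ≠ 0 := (Real.Gamma_pos_of_pos (by linarith)).ne'
    have hGkb : Real.Gamma ((k:ℝ)+β+1) ≠ 0 := (Real.Gamma_pos_of_pos (by linarith)).ne'
    have hG1 : Real.Gamma (α+1) ≠ 0 := (Real.Gamma_pos_of_pos (by linarith)).ne'
    have hG2 : Real.Gamma (α+2) ≠ 0 := (Real.Gamma_pos_of_pos (by linarith)).ne'
    have hfac : ((k.factorial : ℝ)) ≠ 0 := Nat.cast_ne_zero.mpr k.factorial_ne_zero
    have h2k : 2*(k:ℝ)+α+β+1 ≠ 0 := by linarith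
    have hA : (2:ℝ)^(α+β+1) ≠ 0 := (Real.rpow_pos_of_pos two_pos _).ne'
    have hA2 : (2:ℝ)^(-α-β-2) = 1/(2 * (2:ℝ)^(α+β+1)) := by
      rw [show -α-β-2 = (-1) + -(α+β+1) by ring, Real.rpow_add two_pos,
        Real.rpow_neg_one, Real.rpow_neg (le_of_lt two_pos)]
      field_simp
    rw [show (k:ℝ)+α+1 = α+(k:ℝ)+1 by ring, show (k:ℝ)+α+β+1 = α+β+(k:ℝ)+1 by ring,
      show α+β+(k:ℝ)+1+1 = (α+β+(k:ℝ)+1)+1 by ring, Real.Gamma_add_one (ne_of_gt hab),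
      show α+1+1 = α+2 by ring, hA2]
    field_simp

private lemma Saux_sum (α β : ℝ) (hα : -1 < α) (hβ : -1 < β) :
    ∀ n, 1 ≤ n → ∑ k ∈ Finset.range (n+1), Saux α β k =
      Real.Gamma (n+α+β+3) * Real.Gamma (n+α+2) /
        (Real.Gamma n * Real.Gamma (n+β+1) * Real.Gamma (α+3)) := by
  intro n hn
  induction n, hn using Nat.le_induction with
  | base =>
    have hab : α + β + 2 > 0 := by linarith
    have h3 : Real.Gamma (α+β+4) = (α+β+3)*((α+β+2)*Real.Gamma (α+β+2)) := by
      rw [show α+β+4 = (α+β+3)+1 by ring, Real.Gamma_add_one (ne_of_gt (by linarith)),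
        show α+β+3 = (α+β+2)+1 by ring, Real.Gamma_add_one (ne_of_gt (by linarith))]
    have h3' : Real.Gamma (α+3) = (α+2)*Real.Gamma (α+2) := by
      rw [show α+3 = (α+2)+1 by ring, Real.Gamma_add_one (ne_of_gt (by linarith))]
    have hG2 : Real.Gamma (α+2) ≠ 0 := (Real.Gamma_pos_of_pos (by linarith)).ne'
    have hGb : Real.Gamma (β+2) ≠ 0 := (Real.Gamma_pos_of_pos (by linarith)).ne'
    simp only [Saux, Finset.sum_range_succ, Finset.sum_range_zero]
    norm_num [Real.Gamma_one]
    rw [show (1:ℝ)+α+β+3 = α+β+4 by ring, show (1:ℝ)+α+2 = α+3 by ring,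
      show (1:ℝ)+β+1 = β+2 by ring, h3, h3']
    have h2 : α+2 ≠ 0 := by linarith
    field_simp
    ring_nf
  | succ n hn IH =>
    have hn1 : (1:ℝ) ≤ n := by exact_mod_cast hn
    have hnne : (n:ℝ) ≠ 0 := by linarith
    have hfac : ((n+1).factorial : ℝ) = (n+1) * (n * Real.Gamma n) := by
      have := Real.Gamma_nat_eq_factorial (n+1)
      push_cast at this
      rw [← this, show (n:ℝ)+1+1 = ((n:ℝ)+1)+1 by ring,
        Real.Gamma_add_one (by linarith), Real.Gamma_add_one hnne]
    have e1 : Real.Gamma ((n:ℝ)+1+α+β+3)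
        = ((n:ℝ)+α+β+3)*(((n:ℝ)+α+β+2)*Real.Gamma ((n:ℝ)+α+β+2)) := by
      rw [show (n:ℝ)+1+α+β+3 = ((n:ℝ)+α+β+3)+1 by ring,
        Real.Gamma_add_one (by linarith),
        show (n:ℝ)+α+β+3 = ((n:ℝ)+α+β+2)+1 by ring, Real.Gamma_add_one (by linarith)]
    have e2 : Real.Gamma ((n:ℝ)+α+β+3) = ((n:ℝ)+α+β+2)*Real.Gamma ((n:ℝ)+α+β+2) := by
      rw [show (n:ℝ)+α+β+3 = ((n:ℝ)+α+β+2)+1 by ring, Real.Gamma_add_one (by linarith)]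
    have e3 : Real.Gamma ((n:ℝ)+1+α+2) = ((n:ℝ)+α+2)*Real.Gamma ((n:ℝ)+α+2) := by
      rw [show (n:ℝ)+1+α+2 = ((n:ℝ)+α+2)+1 by ring, Real.Gamma_add_one (by linarith)]
    have e4 : Real.Gamma ((n:ℝ)+1) = n * Real.Gamma n := Real.Gamma_add_one hnne
    have hGn : Real.Gamma (n:ℝ) ≠ 0 := (Real.Gamma_pos_of_pos (by linarith)).ne'
    have hGnb : Real.Gamma ((n:ℝ)+β+1) ≠ 0 := (Real.Gamma_pos_of_pos (by linarith)).ne'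
    have hG2 : Real.Gamma (α+2) ≠ 0 := (Real.Gamma_pos_of_pos (by linarith)).ne'
    have hG3 : Real.Gamma (α+3) = (α+2)*Real.Gamma (α+2) := by
      rw [show α+3 = (α+2)+1 by ring, Real.Gamma_add_one (ne_of_gt (by linarith))]
    have hnb : (n:ℝ)+β+1 ≠ 0 := by linarith
    rw [Finset.sum_range_succ, IH]
    unfold Saux
    push_cast
    rw [show α+((n:ℝ)+1)+1 = (n:ℝ)+α+2 by ring, show α+β+((n:ℝ)+1)+1 = (n:ℝ)+α+β+2 by ring,
      show (n:ℝ)+1+β+1 = ((n:ℝ)+β+1)+1 by ring, Real.Gamma_add_one hnb,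
      e1, e2, e3, e4, hfac, hG3]
    have h2 : α+2 ≠ 0 := by linarith
    have hn1' : (n:ℝ)+1 ≠ 0 := by linarith
    field_simp
    ring

/-- The partial derivative `K_n^{(0,1)}(t,u) = ∂K_n/∂u` of the Jacobi kernel, at `(1,1)`. -/
theorem jacobiK01_one_one (α β : ℝ) (hα : -1 < α) (hβ : -1 < β) (n : ℕ) (hn : 1 ≤ n) :
    deriv (fun u => jacobiK α β n 1 u) 1 =
      2 ^ (-α - β - 2) / Real.Gamma (α + 1) *
        (Real.Gamma (n + α + β + 3) / Real.Gamma (n + β + 1)) *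
        (Real.Gamma (n + α + 2) / (Real.Gamma (n : ℝ) * Real.Gamma (α + 3))) := by
  have hD : HasDerivAt (fun u => jacobiK α β n 1 u)
      (∑ k ∈ Finset.range (n+1), jacobiP α β k 1 *
        ((Real.Gamma (α + k + 1) / (k.factorial * Real.Gamma (α + β + k + 1))) *
          ∑ j ∈ Finset.range (k+1),
            (k.choose j : ℝ) * (Real.Gamma (α + β + k + j + 1) / Real.Gamma (α + j + 1)) *
              ((j:ℝ) * (0:ℝ)^(j-1) * (1/2))) / jacobiH α β k) 1 := by
    unfold jacobiK
    exact HasDerivAt.fun_sum fun k _ =>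
      (((jacobiP_hasDerivAt α β k).const_mul (jacobiP α β k 1)).div_const (jacobiH α β k))
  rw [hD.deriv, Finset.sum_congr rfl (fun k _ => term_eq α β hα hβ k), ← Finset.mul_sum,
    Saux_sum α β hα hβ n hn]
  ring
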